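/- arXiv:1811.10174 — 3 statements merged into one kernel-verified Lean document; each statement's English description precedes it below -/
import Mathlib

section
/- Let H: ℝ^n → (−∞, ∞) be continuous with min H = 0, and suppose there exist R > 0 and C > 0 with min_{|z|=R} H(z) > δ and H(x) ≥ min_{|z|=R} H(z) + C(|x| − R) for all |x| > R, and suppose there exist r > 0 and 0 < ε < δ with H(x) < ε for |x| < r. Then for all sufficiently small τ > 0, (∫_{H(x)>δ} e^{−H(x)/τ} dx) / (∫_{ℝ^n} e^{−H(x)/τ} dx) ≤ C' e^{−(δ−ε)/τ} for a constant C' depending on R, r, C, n but not on τ. -/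
open MeasureTheory

lemma my_integrable_exp_neg_mul_norm {n : ℕ} {C : ℝ} (hC : 0 < C) :
    Integrable (fun x : EuclideanSpace ℝ (Fin n) => Real.exp (-C * ‖x‖)) := by
  have hm : (Module.finrank ℝ (EuclideanSpace ℝ (Fin n)) : ℝ) < ((n + 1 : ℕ) : ℝ) := by
    rw [finrank_euclideanSpace_fin]; exact_mod_cast Nat.lt_succ_self n
  have hint := integrable_one_add_norm (E := EuclideanSpace ℝ (Fin n)) (μ := volume) hm
  set K : ℝ := (Nat.factorial (n+1) : ℝ) * Real.exp C / C ^ (n + 1) with hK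
  refine (hint.const_mul K).mono'
    ((Real.continuous_exp.comp (continuous_const.mul continuous_norm)).aestronglyMeasurable) ?_
  filter_upwards with x
  set t : ℝ := ‖x‖ with hts
  have ht : 0 ≤ t := norm_nonneg x
  rw [Real.norm_eq_abs, abs_of_pos (Real.exp_pos _),
    Real.rpow_neg (by positivity), Real.rpow_natCast]
  have hb : (0:ℝ) < (1 + t) ^ (n + 1) := by positivity
  rw [← div_eq_mul_inv, le_div_iff₀ hb]
  have h1 : (C * (1 + t)) ^ (n + 1) / Nat.factorial (n+1) ≤ Real.exp (C * (1 + t)) :=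
    Real.pow_div_factorial_le_exp (x := C * (1 + t)) (by positivity) (n + 1)
  have h3 : (1 + t) ^ (n + 1) ≤ (Nat.factorial (n+1) : ℝ) * Real.exp (C * (1 + t)) / C ^ (n + 1) := by
    rw [le_div_iff₀ (by positivity)]
    rw [div_le_iff₀ (by positivity : (0:ℝ) < (Nat.factorial (n+1) : ℝ)), mul_pow] at h1
    linarith [h1]
  calc Real.exp (-C * t) * (1 + t) ^ (n + 1)
      ≤ Real.exp (-C * t) * ((Nat.factorial (n+1) : ℝ) * Real.exp (C * (1 + t)) / C ^ (n + 1)) := by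
        exact mul_le_mul_of_nonneg_left h3 (Real.exp_pos _).le
    _ = K := by
        rw [hK, mul_add, Real.exp_add, mul_one, neg_mul, Real.exp_neg]
        have := (Real.exp_pos (C * t)).ne'
        field_simp

theorem gibbs_concentration
    {n : ℕ} (H : EuclideanSpace ℝ (Fin n) → ℝ) (hcont : Continuous H)
    (hH0 : ∀ x, 0 ≤ H x) (hmin : ∃ x, H x = 0)
    (δ ε M R r C : ℝ)
    (hε : 0 < ε) (hεδ : ε < δ) (hR : 0 < R) (hr : 0 < r) (hC : 0 < C)
    (hM : δ < M) (hMle : ∀ z, ‖z‖ = R → M ≤ H z)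
    (hgrowth : ∀ x, R < ‖x‖ → M + C * (‖x‖ - R) ≤ H x)
    (hsmall : ∀ x, ‖x‖ < r → H x < ε) :
    ∃ C' : ℝ, 0 < C' ∧ ∃ τ₀ : ℝ, 0 < τ₀ ∧ ∀ τ : ℝ, 0 < τ → τ < τ₀ →
      (∫ x in {x | δ < H x}, Real.exp (-H x / τ)) / (∫ x, Real.exp (-H x / τ))
        ≤ C' * Real.exp (-(δ - ε) / τ) := by
  classical
  set h : EuclideanSpace ℝ (Fin n) → ℝ :=
    fun x => Set.indicator (Metric.closedBall 0 R) (fun _ => (1:ℝ)) x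
      + Real.exp (C * R) * Real.exp (-C * ‖x‖) with hdef
  have hh_int : Integrable h := by
    refine Integrable.add ?_ ((my_integrable_exp_neg_mul_norm hC).const_mul _)
    rw [integrable_indicator_iff measurableSet_closedBall]
    exact integrableOn_const measure_closedBall_lt_top.ne
  have hh_nonneg : ∀ x, 0 ≤ h x := fun x =>
    add_nonneg (Set.indicator_nonneg (fun _ _ => zero_le_one) x) (by positivity)
  have hh_ge_one : ∀ x, ‖x‖ ≤ R → 1 ≤ h x := by
    intro x hx
    have : Set.indicator (Metric.closedBall (0:EuclideanSpace ℝ (Fin n)) R) (fun _ => (1:ℝ)) x = 1 :=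
      Set.indicator_of_mem (by simpa [Metric.mem_closedBall, dist_zero_right] using hx) _
    rw [hdef]; dsimp only
    rw [this]
    nlinarith [Real.exp_pos (C * R), Real.exp_pos (-C * ‖x‖),
      mul_pos (Real.exp_pos (C * R)) (Real.exp_pos (-C * ‖x‖))]
  have hh_ge_exp : ∀ x, Real.exp (C * R) * Real.exp (-C * ‖x‖) ≤ h x := by
    intro x
    rw [hdef]; dsimp only
    nlinarith [Set.indicator_nonneg (fun (_ : EuclideanSpace ℝ (Fin n)) (_h : _) => (zero_le_one (α := ℝ))) x
      (s := Metric.closedBall (0:EuclideanSpace ℝ (Fin n)) R) (f := fun _ => (1:ℝ))]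
  have hsplit : ∀ x : EuclideanSpace ℝ (Fin n),
      Real.exp (-(C * (‖x‖ - R))) = Real.exp (C * R) * Real.exp (-C * ‖x‖) := by
    intro x; rw [← Real.exp_add]; congr 1; ring
  set K : ℝ := ∫ x, h x with hKdef
  have hK0 : 0 ≤ K := integral_nonneg hh_nonneg
  set v : ℝ := (volume (Metric.ball (0 : EuclideanSpace ℝ (Fin n)) r)).toReal with hvdef
  have hv : 0 < v :=
    ENNReal.toReal_pos (Metric.measure_ball_pos _ _ hr).ne' measure_ball_lt_top.ne
  refine ⟨(K + 1) / v, by positivity, 1, one_pos, fun τ hτ hτ1 => ?_⟩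
  set f : EuclideanSpace ℝ (Fin n) → ℝ := fun x => Real.exp (-H x / τ) with hfdef
  have hfc : Continuous f := Real.continuous_exp.comp ((hcont.neg).div_const τ)
  have hdivτ : ∀ a : ℝ, 0 ≤ a → a ≤ a / τ := by
    intro a ha
    rw [le_div_iff₀ hτ]
    nlinarith
  -- global bound f ≤ h
  have hf_le_h : ∀ x, f x ≤ h x := by
    intro x
    by_cases hx : ‖x‖ ≤ R
    · refine le_trans ?_ (hh_ge_one x hx)
      rw [hfdef]
      calc Real.exp (-H x / τ) ≤ Real.exp 0 := by
            apply Real.exp_le_exp.2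
            apply div_nonpos_of_nonpos_of_nonneg (neg_nonpos.2 (hH0 x)) hτ.le
        _ = 1 := Real.exp_zero
    · push_neg at hx
      refine le_trans ?_ (hh_ge_exp x)
      rw [← hsplit x, hfdef]
      apply Real.exp_le_exp.2
      have hHx : C * (‖x‖ - R) ≤ H x := by
        have := hgrowth x hx
        nlinarith [hε, hεδ, hM]
      have h0 : 0 ≤ C * (‖x‖ - R) := by nlinarith
      calc -H x / τ ≤ -(C * (‖x‖ - R)) / τ := by
            apply (div_le_div_iff_of_pos_right hτ).2; linarith
        _ ≤ -(C * (‖x‖ - R)) := by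
            rw [neg_div]; linarith [hdivτ _ h0]
  have hf_int : Integrable f := by
    refine hh_int.mono' hfc.aestronglyMeasurable ?_
    filter_upwards with x
    rw [Real.norm_eq_abs, abs_of_pos (Real.exp_pos _)]
    exact hf_le_h x
  have hSmeas : MeasurableSet {x | δ < H x} :=
    measurableSet_lt measurable_const hcont.measurable
  have hfS : ∀ x ∈ {x | δ < H x}, f x ≤ Real.exp (-δ / τ) * h x := by
    intro x hx
    simp only [Set.mem_setOf_eq] at hx
    by_cases hxR : ‖x‖ ≤ R
    · have h1 : f x ≤ Real.exp (-δ / τ) := by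
        apply Real.exp_le_exp.2
        apply (div_le_div_iff_of_pos_right hτ).2
        linarith
      calc f x ≤ Real.exp (-δ / τ) * 1 := by rw [mul_one]; exact h1
        _ ≤ Real.exp (-δ / τ) * h x :=
            mul_le_mul_of_nonneg_left (hh_ge_one x hxR) (Real.exp_pos _).le
    · push_neg at hxR
      have hHx : δ + C * (‖x‖ - R) ≤ H x := by
        have := hgrowth x hxR; nlinarith
      have h0 : 0 ≤ C * (‖x‖ - R) := by nlinarith
      have h2 : -H x / τ ≤ -δ / τ + -(C * (‖x‖ - R)) := by
        have ha : -H x / τ ≤ (-δ + -(C * (‖x‖ - R))) / τ :=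
          (div_le_div_iff_of_pos_right hτ).2 (by linarith)
        have hb : (-δ + -(C * (‖x‖ - R))) / τ = -δ / τ + -(C * (‖x‖ - R)) / τ := by ring
        have hcm : -(C * (‖x‖ - R)) / τ ≤ -(C * (‖x‖ - R)) := by
          rw [neg_div]; linarith [hdivτ _ h0]
        linarith
      calc f x ≤ Real.exp (-δ / τ + -(C * (‖x‖ - R))) := Real.exp_le_exp.2 h2
        _ = Real.exp (-δ / τ) * (Real.exp (C * R) * Real.exp (-C * ‖x‖)) := by
            rw [Real.exp_add, hsplit x]
        _ ≤ Real.exp (-δ / τ) * h x :=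
            mul_le_mul_of_nonneg_left (hh_ge_exp x) (Real.exp_pos _).le
  have num_le : (∫ x in {x | δ < H x}, f x) ≤ Real.exp (-δ / τ) * K := by
    calc (∫ x in {x | δ < H x}, f x)
        ≤ ∫ x in {x | δ < H x}, Real.exp (-δ / τ) * h x :=
          setIntegral_mono_on hf_int.integrableOn (hh_int.const_mul _).integrableOn hSmeas hfS
      _ = Real.exp (-δ / τ) * ∫ x in {x | δ < H x}, h x := integral_const_mul _ _
      _ ≤ Real.exp (-δ / τ) * K := by
          apply mul_le_mul_of_nonneg_left ?_ (Real.exp_pos _).le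
          exact setIntegral_le_integral hh_int (Filter.Eventually.of_forall hh_nonneg)
  have den_ge : v * Real.exp (-ε / τ) ≤ ∫ x, f x := by
    have step1 : v * Real.exp (-ε / τ)
        = ∫ _x in Metric.ball (0 : EuclideanSpace ℝ (Fin n)) r, Real.exp (-ε / τ) := by
      rw [setIntegral_const, smul_eq_mul]; rfl
    rw [step1]
    calc (∫ _x in Metric.ball (0 : EuclideanSpace ℝ (Fin n)) r, Real.exp (-ε / τ))
        ≤ ∫ x in Metric.ball (0 : EuclideanSpace ℝ (Fin n)) r, f x := by
          apply setIntegral_mono_on (integrableOn_const measure_ball_lt_top.ne)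
            hf_int.integrableOn measurableSet_ball
          intro x hx
          apply Real.exp_le_exp.2
          apply (div_le_div_iff_of_pos_right hτ).2
          have := hsmall x (by simpa [Metric.mem_ball, dist_zero_right] using hx)
          linarith
      _ ≤ ∫ x, f x := setIntegral_le_integral hf_int
            (Filter.Eventually.of_forall fun x => (Real.exp_pos _).le)
  have hden : 0 < ∫ x, f x := lt_of_lt_of_le (by positivity) den_ge
  calc (∫ x in {x | δ < H x}, f x) / (∫ x, f x)
      ≤ (Real.exp (-δ / τ) * (K + 1)) / (v * Real.exp (-ε / τ)) := by
        apply div_le_div₀ (by positivity) ?_ (by positivity) den_ge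
        nlinarith [num_le, Real.exp_pos (-δ / τ)]
    _ = (K + 1) / v * Real.exp (-(δ - ε) / τ) := by
        have he : Real.exp (-(δ - ε) / τ) = Real.exp (-δ / τ) / Real.exp (-ε / τ) := by
          rw [← Real.exp_sub]; congr 1; ring
        rw [he]
        field_simp
end

section
/- Suppose a nonnegative differentiable function I: [t₀, ∞) → [0, ∞) satisfies I'(t) ≤ −C₁(1+t)^{−β} I(t) + C₂(1+t)^{−1+ε} for all t ≥ t₀, where 0 < β < 1, ε > 0 with β + 2ε < 1, and C₁, C₂ > 0. Then there exists a constant C such that I(t) ≤ (2C₂/C₁)(1+t)^{−1+β+2ε} + I(t₀) exp(−(C₁/ν)((1+t)^ν − (1+t₀)^ν)) for all t ≥ t₀ (for t₀ large enough), where ν = 1 − β − ε > 0; in particular I(t) = O((1+t)^{−1+β+2ε}). -/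
open Asymptotics Filter

lemma hasDerivAt_one_add_rpow (p t : ℝ) (h : 0 < 1 + t) :
    HasDerivAt (fun t : ℝ => (1+t)^p) (p * (1+t)^(p-1)) t := by
  have h1 : HasDerivAt (fun t : ℝ => 1 + t) 1 t := (hasDerivAt_id t).const_add 1
  have h2 := (Real.hasDerivAt_rpow_const (x := 1+t) (p := p) (Or.inl h.ne')).comp t h1
  rw [mul_one] at h2; exact h2

theorem gronwall_annealing
    (I : ℝ → ℝ) (t₀ β ε C₁ C₂ : ℝ)
    (ht₀ : 0 ≤ t₀) (hβ : 0 < β) (hβ1 : β < 1) (hε : 0 < ε) (hβε : β + 2 * ε < 1)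
    (hC₁ : 0 < C₁) (hC₂ : 0 < C₂)
    (hI0 : ∀ t, t₀ ≤ t → 0 ≤ I t)
    (hIdiff : ∀ t, t₀ ≤ t → DifferentiableAt ℝ I t)
    (hI' : ∀ t, t₀ ≤ t →
      deriv I t ≤ -C₁ * (1 + t) ^ (-β) * I t + C₂ * (1 + t) ^ (-1 + ε)) :
    ∃ t₁ : ℝ, t₀ ≤ t₁ ∧
      (∀ t, t₁ ≤ t →
        I t ≤ (2 * C₂ / C₁) * (1 + t) ^ (-1 + β + 2 * ε)
          + I t₁ * Real.exp (-(C₁ / (1 - β - ε))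
              * ((1 + t) ^ (1 - β - ε) - (1 + t₁) ^ (1 - β - ε)))) ∧
      (fun t => I t) =O[atTop] fun t => (1 + t) ^ (-1 + β + 2 * ε) := by
  set ν : ℝ := 1 - β - ε with hνdef
  set α : ℝ := -1 + β + 2 * ε with hαdef
  have hν : 0 < ν := by simp only [hνdef]; linarith
  set K : ℝ := max 1 (2 / C₁) with hKdef
  have hK1 : 1 ≤ K := le_max_left _ _
  set t₁ : ℝ := max t₀ (K ^ (1/ν)) with ht₁def
  have hKν1 : (1:ℝ) ≤ K ^ (1/ν) := Real.one_le_rpow hK1 (by positivity)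
  have ht₀t₁ : t₀ ≤ t₁ := le_max_left _ _
  have ht₁0 : (0:ℝ) ≤ t₁ := le_trans (by linarith) (le_max_right _ _)
  -- basic facts for t ≥ t₁
  have hx1 : ∀ t, t₁ ≤ t → (1:ℝ) ≤ 1 + t := fun t ht => by linarith
  have hxpos : ∀ t, t₁ ≤ t → (0:ℝ) < 1 + t := fun t ht => by linarith [hx1 t ht]
  have hKbound : ∀ t, t₁ ≤ t → 2 / C₁ ≤ (1 + t) ^ ν := by
    intro t ht
    have h1 : K ^ (1/ν) ≤ 1 + t := by
      have := le_max_right t₀ (K ^ (1/ν)); linarith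
    have h2 : (K ^ (1/ν)) ^ ν ≤ (1 + t) ^ ν :=
      Real.rpow_le_rpow (by positivity) h1 hν.le
    have h3 : (K ^ (1/ν)) ^ ν = K := by
      rw [← Real.rpow_mul (by linarith), one_div, inv_mul_cancel₀ hν.ne', Real.rpow_one]
    calc 2 / C₁ ≤ K := le_max_right _ _
      _ = (K ^ (1/ν)) ^ ν := h3.symm
      _ ≤ _ := h2
  -- auxiliary functions
  set A : ℝ → ℝ := fun t => (2 * C₂ / C₁) * (1 + t) ^ α with hAdef
  set φ : ℝ → ℝ := fun t => (C₁ / ν) * ((1 + t) ^ ν - (1 + t₁) ^ ν) with hφdef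
  set G : ℝ → ℝ := fun t => (I t - A t) * Real.exp (φ t) with hGdef
  -- derivatives
  have hAderiv : ∀ t, t₁ ≤ t →
      HasDerivAt A ((2 * C₂ / C₁) * (α * (1 + t) ^ (α - 1))) t := by
    intro t ht
    exact (hasDerivAt_one_add_rpow α t (hxpos t ht)).const_mul _
  have hφderiv : ∀ t, t₁ ≤ t → HasDerivAt φ (C₁ * (1 + t) ^ (ν - 1)) t := by
    intro t ht
    have h1 := ((hasDerivAt_one_add_rpow ν t (hxpos t ht)).sub_const
      ((1 + t₁) ^ ν)).const_mul (C₁ / ν)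
    have : C₁ / ν * (ν * (1 + t) ^ (ν - 1)) = C₁ * (1 + t) ^ (ν - 1) := by
      field_simp
    rwa [this] at h1
  have hGderiv : ∀ t, t₁ ≤ t →
      HasDerivAt G ((deriv I t - (2 * C₂ / C₁) * (α * (1 + t) ^ (α - 1))
        + (I t - A t) * (C₁ * (1 + t) ^ (ν - 1))) * Real.exp (φ t)) t := by
    intro t ht
    have hI : HasDerivAt I (deriv I t) t := (hIdiff t (le_trans ht₀t₁ ht)).hasDerivAt
    have h1 : HasDerivAt (fun t => I t - A t)
        (deriv I t - (2 * C₂ / C₁) * (α * (1 + t) ^ (α - 1))) t :=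
      hI.sub (hAderiv t ht)
    have h2 : HasDerivAt (fun t => Real.exp (φ t))
        (Real.exp (φ t) * (C₁ * (1 + t) ^ (ν - 1))) t := (hφderiv t ht).exp
    have := h1.mul h2
    refine this.congr_deriv ?_
    ring
  -- the derivative of G is nonpositive on [t₁, ∞)
  have hGderiv_nonpos : ∀ t, t₁ ≤ t → deriv G t ≤ 0 := by
    intro t ht
    rw [(hGderiv t ht).deriv]
    have hxp := hxpos t ht
    have hx1' := hx1 t ht
    have hIt0 : 0 ≤ I t := hI0 t (le_trans ht₀t₁ ht)
    have key : deriv I t - (2 * C₂ / C₁) * (α * (1 + t) ^ (α - 1))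
        + (I t - A t) * (C₁ * (1 + t) ^ (ν - 1)) ≤ 0 := by
      have hd := hI' t (le_trans ht₀t₁ ht)
      -- rpow comparisons
      have e1 : (1 + t) ^ (ν - 1) ≤ (1 + t) ^ (-β) :=
        Real.rpow_le_rpow_of_exponent_le hx1' (by simp only [hνdef]; linarith)
      -- A t * (C₁ * (1+t)^(ν-1)) = 2*C₂*(1+t)^(-1+ε)
      have e2 : A t * (C₁ * (1 + t) ^ (ν - 1)) = 2 * C₂ * (1 + t) ^ (-1 + ε) := by
        simp only [hAdef]
        rw [mul_comm C₁, mul_assoc, ← mul_assoc ((1+t)^α), ← Real.rpow_add hxp]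
        have : α + (ν - 1) = -1 + ε := by simp only [hαdef, hνdef]; ring
        rw [this]
        field_simp
      -- (2*C₂/C₁) * (-(α)) * (1+t)^(α-1) ≤ C₂ * (1+t)^(-1+ε)
      have e3 : (2 * C₂ / C₁) * (-α) * (1 + t) ^ (α - 1) ≤ C₂ * (1 + t) ^ (-1 + ε) := by
        have hα1 : -α ≤ 1 := by simp only [hαdef]; linarith
        have hαpos : 0 ≤ -α := by simp only [hαdef]; linarith
        have hp : (0:ℝ) < (1 + t) ^ (α - 1) := Real.rpow_pos_of_pos hxp _
        have step1 : (2 * C₂ / C₁) * (-α) * (1 + t) ^ (α - 1)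
            ≤ (2 * C₂ / C₁) * (1 + t) ^ (α - 1) := by
          have : (2 * C₂ / C₁) * (-α) ≤ (2 * C₂ / C₁) * 1 :=
            mul_le_mul_of_nonneg_left hα1 (by positivity)
          nlinarith
        have step2 : (2 * C₂ / C₁) * (1 + t) ^ (α - 1) ≤ C₂ * (1 + t) ^ (-1 + ε) := by
          have hKb := hKbound t ht
          have hsplit : (1 + t) ^ (-1 + ε) = (1 + t) ^ (α - 1) * (1 + t) ^ ν := by
            rw [← Real.rpow_add hxp]
            congr 1
            simp only [hαdef, hνdef]; ring
          rw [hsplit]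
          have h6 : (2 / C₁) * (1 + t) ^ (α - 1) ≤ (1 + t) ^ ν * (1 + t) ^ (α - 1) :=
            mul_le_mul_of_nonneg_right hKb hp.le
          calc 2 * C₂ / C₁ * (1 + t) ^ (α - 1) = C₂ * (2 / C₁ * (1 + t) ^ (α - 1)) := by ring
            _ ≤ C₂ * ((1 + t) ^ ν * (1 + t) ^ (α - 1)) :=
                mul_le_mul_of_nonneg_left h6 hC₂.le
            _ = C₂ * ((1 + t) ^ (α - 1) * (1 + t) ^ ν) := by ring
        linarith
      -- main combination
      have e4 : I t * (C₁ * (1 + t) ^ (ν - 1)) ≤ I t * (C₁ * (1 + t) ^ (-β)) := by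
        apply mul_le_mul_of_nonneg_left _ hIt0
        exact mul_le_mul_of_nonneg_left e1 hC₁.le
      nlinarith [e2, e3, e4, hd]
    have hexp : (0:ℝ) ≤ Real.exp (φ t) := (Real.exp_pos _).le
    exact mul_nonpos_of_nonpos_of_nonneg key hexp
  -- G is antitone on [t₁, ∞)
  have hGanti : AntitoneOn G (Set.Ici t₁) := by
    apply antitoneOn_of_deriv_nonpos (convex_Ici t₁)
    · intro t ht
      exact ((hGderiv t ht).differentiableAt).continuousAt.continuousWithinAt
    · intro t ht
      rw [interior_Ici] at ht
      exact ((hGderiv t (le_of_lt ht)).differentiableAt).differentiableWithinAt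
    · intro t ht
      rw [interior_Ici] at ht
      exact hGderiv_nonpos t (le_of_lt ht)
  -- main pointwise bound
  have hmain : ∀ t, t₁ ≤ t → I t ≤ A t + I t₁ * Real.exp (-(φ t)) := by
    intro t ht
    have h1 : G t ≤ G t₁ := hGanti (Set.self_mem_Ici) (Set.mem_Ici.mpr ht) ht
    have h2 : G t₁ = I t₁ - A t₁ := by
      simp only [hGdef, hφdef]
      rw [sub_self, mul_zero, Real.exp_zero, mul_one]
    have hA0 : 0 ≤ A t₁ := by positivity
    have h3 : (I t - A t) * Real.exp (φ t) ≤ I t₁ := by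
      rw [hGdef] at h1 -- h1 : G t ≤ G t₁
      calc (I t - A t) * Real.exp (φ t) = G t := rfl
        _ ≤ G t₁ := h1
        _ = I t₁ - A t₁ := h2
        _ ≤ I t₁ := by linarith
    have hepos : 0 < Real.exp (φ t) := Real.exp_pos _
    have h4 : I t - A t ≤ I t₁ * Real.exp (-(φ t)) := by
      rw [Real.exp_neg, mul_comm (I t₁), ← div_eq_inv_mul, le_div_iff₀ hepos]
      exact h3
    linarith
  refine ⟨t₁, ht₀t₁, ?_, ?_⟩
  · intro t ht
    have := hmain t ht
    have heq : -(φ t) = -(C₁ / (1 - β - ε))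
        * ((1 + t) ^ (1 - β - ε) - (1 + t₁) ^ (1 - β - ε)) := by
      simp only [hφdef, ← hνdef]; ring
    rw [← heq]
    simpa [hAdef, hαdef] using this
  · -- big O
    have hIt₁0 : 0 ≤ I t₁ := hI0 t₁ ht₀t₁
    -- exp(-(C₁/ν)x) =o x^(α/ν) composed with x = (1+t)^ν
    have hlo : (fun t : ℝ => Real.exp (-(C₁/ν) * (1 + t) ^ ν)) =o[atTop]
        fun t : ℝ => ((1 + t) ^ ν) ^ (α / ν) := by
      have h1 : (fun x : ℝ => Real.exp (-(C₁/ν) * x)) =o[atTop]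
          fun x : ℝ => x ^ (α / ν) := isLittleO_exp_neg_mul_rpow_atTop (by positivity) _
      have h2 : Tendsto (fun t : ℝ => (1 + t) ^ ν) atTop atTop := by
        exact (tendsto_rpow_atTop hν).comp (tendsto_atTop_add_const_left atTop 1 tendsto_id)
      exact h1.comp_tendsto h2
    have hlo2 : (fun t : ℝ => Real.exp (-(C₁/ν) * (1 + t) ^ ν)) =o[atTop]
        fun t : ℝ => (1 + t) ^ α := by
      apply hlo.congr' (EventuallyEq.refl _ _)
      filter_upwards [eventually_ge_atTop (0:ℝ)] with t ht
      rw [← Real.rpow_mul (by linarith)]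
      congr 1
      field_simp
    set E₀ : ℝ := Real.exp ((C₁/ν) * (1 + t₁) ^ ν) with hE₀def
    have hE₀pos : 0 < E₀ := Real.exp_pos _
    rw [isBigO_iff]
    refine ⟨2 * C₂ / C₁ + I t₁ * E₀, ?_⟩
    filter_upwards [hlo2.def one_pos, eventually_ge_atTop t₁] with t hexp ht
    have hxp := hxpos t ht
    have hIt0 : 0 ≤ I t := hI0 t (le_trans ht₀t₁ ht)
    have hrp : (0:ℝ) < (1 + t) ^ α := Real.rpow_pos_of_pos hxp _
    have hnorm1 : ‖(1 + t) ^ α‖ = (1 + t) ^ α := Real.norm_of_nonneg hrp.le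
    have hexp' : Real.exp (-(C₁/ν) * (1 + t) ^ ν) ≤ (1 + t) ^ α := by
      have := hexp
      rw [Real.norm_eq_abs, Real.norm_eq_abs, abs_of_pos (Real.exp_pos _),
        abs_of_pos hrp, one_mul] at this
      exact this
    have hsplit : Real.exp (-(φ t)) = E₀ * Real.exp (-(C₁/ν) * (1 + t) ^ ν) := by
      rw [hE₀def, ← Real.exp_add]
      congr 1
      simp only [hφdef]
      ring
    have hb := hmain t ht
    have hb2 : I t ≤ (2 * C₂ / C₁) * (1 + t) ^ α + (I t₁ * E₀) * (1 + t) ^ α := by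
      have h7 : I t₁ * Real.exp (-(φ t)) ≤ (I t₁ * E₀) * (1 + t) ^ α := by
        rw [hsplit, ← mul_assoc]
        exact mul_le_mul_of_nonneg_left hexp' (by positivity)
      simp only [hAdef] at hb
      linarith
    rw [Real.norm_eq_abs, abs_of_nonneg hIt0, hnorm1]
    calc I t ≤ (2 * C₂ / C₁) * (1 + t) ^ α + (I t₁ * E₀) * (1 + t) ^ α := hb2
      _ = (2 * C₂ / C₁ + I t₁ * E₀) * (1 + t) ^ α := by ring
end

section
/- Let μ_t(x₁,x₂) = ½(π_t(x₁,x₂) + π_t(x₂,x₁)) where π_t(x₁,x₂) = Z_t^{−1} exp(−H(x₁)/τ₁(t) − H(x₂)/τ₂(t)), with H ≥ 0, min H = 0, and τ₁(t), τ₂(t) positive and decreasing in t. Then the time derivative of ln μ_t satisfies the pointwise bound −(d/dt) ln μ_t(x₁,x₂) ≤ ((d/dt)(1/τ₁(t)) + (d/dt)(1/τ₂(t))) (H(x₁) + H(x₂)). -/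
open MeasureTheory

lemma monotone_hasDerivAt_nonneg' {f : ℝ → ℝ} {f' x : ℝ}
    (hm : Monotone f) (h : HasDerivAt f f' x) : 0 ≤ f' := by
  have ht := hasDerivAt_iff_tendsto_slope.mp h
  refine ge_of_tendsto ht ?_
  filter_upwards with y
  simp only [slope_def_field, div_eq_mul_inv]
  rw [← div_eq_mul_inv]
  rcases le_total x y with hxy | hxy
  · exact div_nonneg (sub_nonneg.2 (hm hxy)) (sub_nonneg.2 hxy)
  · have h := div_nonneg (neg_nonneg.2 (sub_nonpos.2 (hm hxy)))
      (neg_nonneg.2 (sub_nonpos.2 hxy))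
    rwa [neg_div_neg_eq] at h

theorem annealing_log_density_derivative_bound
    {d : ℕ} (H : EuclideanSpace ℝ (Fin d) → ℝ)
    (hH0 : ∀ x, 0 ≤ H x) (hmin : ∃ x, H x = 0)
    (τ₁ τ₂ : ℝ → ℝ) (hτ₁pos : ∀ t, 0 < τ₁ t) (hτ₂pos : ∀ t, 0 < τ₂ t)
    (hτ₁dec : Antitone τ₁) (hτ₂dec : Antitone τ₂)
    (hτ₁diff : Differentiable ℝ τ₁) (hτ₂diff : Differentiable ℝ τ₂)
    (Zt : ℝ → ℝ)
    (hZ : ∀ t, Zt t = ∫ p : EuclideanSpace ℝ (Fin d) × EuclideanSpace ℝ (Fin d),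
      Real.exp (-H p.1 / τ₁ t - H p.2 / τ₂ t))
    (hZint : ∀ t, Integrable
      (fun p : EuclideanSpace ℝ (Fin d) × EuclideanSpace ℝ (Fin d) =>
        Real.exp (-H p.1 / τ₁ t - H p.2 / τ₂ t)))
    (hZpos : ∀ t, 0 < Zt t)
    (πt : ℝ → EuclideanSpace ℝ (Fin d) → EuclideanSpace ℝ (Fin d) → ℝ)
    (hπ : ∀ t x₁ x₂, πt t x₁ x₂ = Real.exp (-H x₁ / τ₁ t - H x₂ / τ₂ t) / Zt t)
    (μt : ℝ → EuclideanSpace ℝ (Fin d) → EuclideanSpace ℝ (Fin d) → ℝ)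
    (hμ : ∀ t x₁ x₂, μt t x₁ x₂ = (πt t x₁ x₂ + πt t x₂ x₁) / 2) :
    ∀ t x₁ x₂,
      -(deriv (fun u => Real.log (μt u x₁ x₂)) t)
        ≤ (deriv (fun u => 1 / τ₁ u) t + deriv (fun u => 1 / τ₂ u) t)
            * (H x₁ + H x₂) := by
  intro t x₁ x₂
  -- abbreviations
  set A : ℝ → ℝ := fun u => Real.exp (-H x₁ / τ₁ u - H x₂ / τ₂ u) with hAdef
  set B : ℝ → ℝ := fun u => Real.exp (-H x₂ / τ₁ u - H x₁ / τ₂ u) with hBdef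
  have hApos : ∀ u, 0 < A u := fun u => Real.exp_pos _
  have hBpos : ∀ u, 0 < B u := fun u => Real.exp_pos _
  have hABpos : ∀ u, 0 < A u + B u := fun u => add_pos (hApos u) (hBpos u)
  -- derivatives of 1/τᵢ
  have hd₁ : DifferentiableAt ℝ (fun u => 1 / τ₁ u) t := by
    simp only [one_div]; exact (hτ₁diff t).inv (hτ₁pos t).ne'
  have hd₂ : DifferentiableAt ℝ (fun u => 1 / τ₂ u) t := by
    simp only [one_div]; exact (hτ₂diff t).inv (hτ₂pos t).ne'
  set s₁' := deriv (fun u => 1 / τ₁ u) t with hs₁def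
  set s₂' := deriv (fun u => 1 / τ₂ u) t with hs₂def
  have hs₁ : HasDerivAt (fun u => 1 / τ₁ u) s₁' t := hd₁.hasDerivAt
  have hs₂ : HasDerivAt (fun u => 1 / τ₂ u) s₂' t := hd₂.hasDerivAt
  have hmono₁ : Monotone (fun u => 1 / τ₁ u) := fun u v huv =>
    one_div_le_one_div_of_le (hτ₁pos v) (hτ₁dec huv)
  have hmono₂ : Monotone (fun u => 1 / τ₂ u) := fun u v huv =>
    one_div_le_one_div_of_le (hτ₂pos v) (hτ₂dec huv)
  have hs₁nn : 0 ≤ s₁' := monotone_hasDerivAt_nonneg' hmono₁ hs₁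
  have hs₂nn : 0 ≤ s₂' := monotone_hasDerivAt_nonneg' hmono₂ hs₂
  -- Z is antitone
  have hexp_mono : ∀ (x : EuclideanSpace ℝ (Fin d)) {u v : ℝ}, u ≤ v →
      -H x / τ₁ v ≤ -H x / τ₁ u := by
    intro x u v huv
    have h1 : H x / τ₁ u ≤ H x / τ₁ v := by
      gcongr
      exacts [hH0 x, hτ₁pos v, hτ₁dec huv]
    simp only [neg_div]
    linarith
  have hexp_mono2 : ∀ (x : EuclideanSpace ℝ (Fin d)) {u v : ℝ}, u ≤ v →
      H x / τ₂ u ≤ H x / τ₂ v := by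
    intro x u v huv
    gcongr
    exacts [hH0 x, hτ₂pos v, hτ₂dec huv]
  have hZanti : Antitone Zt := by
    intro u v huv
    rw [hZ u, hZ v]
    refine integral_mono (hZint v) (hZint u) fun p => ?_
    apply Real.exp_le_exp.2
    have h1 := hexp_mono p.1 huv
    have h2 := hexp_mono2 p.2 huv
    linarith
  -- rewrite log μ
  have hfeq : (fun u => Real.log (μt u x₁ x₂))
      = fun u => Real.log (A u + B u) - Real.log (Zt u) - Real.log 2 := by
    funext u
    have hμu : μt u x₁ x₂ = (A u + B u) / (Zt u * 2) := by
      rw [hμ, hπ, hπ]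
      field_simp
      simp only [hAdef, hBdef, neg_div]
    rw [hμu, Real.log_div (hABpos u).ne' (mul_pos (hZpos u) two_pos).ne',
      Real.log_mul (hZpos u).ne' two_ne_zero]
    ring
  rw [hfeq]
  -- derivative of the exponent parts
  have hfa : (fun u => -H x₁ / τ₁ u - H x₂ / τ₂ u)
      = fun u => -H x₁ * (1 / τ₁ u) - H x₂ * (1 / τ₂ u) := by funext u; ring
  have hfb : (fun u => -H x₂ / τ₁ u - H x₁ / τ₂ u)
      = fun u => -H x₂ * (1 / τ₁ u) - H x₁ * (1 / τ₂ u) := by funext u; ring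
  have ha : HasDerivAt (fun u => -H x₁ / τ₁ u - H x₂ / τ₂ u)
      (-H x₁ * s₁' - H x₂ * s₂') t := by
    rw [hfa]; exact (hs₁.const_mul (-H x₁)).sub (hs₂.const_mul (H x₂))
  have hb : HasDerivAt (fun u => -H x₂ / τ₁ u - H x₁ / τ₂ u)
      (-H x₂ * s₁' - H x₁ * s₂') t := by
    rw [hfb]; exact (hs₁.const_mul (-H x₂)).sub (hs₂.const_mul (H x₁))
  have hA' : HasDerivAt A (A t * (-H x₁ * s₁' - H x₂ * s₂')) t := ha.exp
  have hB' : HasDerivAt B (B t * (-H x₂ * s₁' - H x₁ * s₂')) t := hb.exp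
  have hG : HasDerivAt (fun u => Real.log (A u + B u))
      ((A t * (-H x₁ * s₁' - H x₂ * s₂') + B t * (-H x₂ * s₁' - H x₁ * s₂'))
        / (A t + B t)) t := (hA'.add hB').log (hABpos t).ne'
  set G' : ℝ := (A t * (-H x₁ * s₁' - H x₂ * s₂') + B t * (-H x₂ * s₁' - H x₁ * s₂'))
      / (A t + B t) with hG'def
  -- key bound on -G'
  have key : -G' ≤ (s₁' + s₂') * (H x₁ + H x₂) := by
    have hneg : -G' = (A t * (H x₁ * s₁' + H x₂ * s₂') + B t * (H x₂ * s₁' + H x₁ * s₂'))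
        / (A t + B t) := by
      rw [hG'def]
      field_simp
      ring
    rw [hneg, div_le_iff₀ (hABpos t)]
    nlinarith [mul_nonneg (hApos t).le (mul_nonneg (hH0 x₁) hs₂nn),
      mul_nonneg (hApos t).le (mul_nonneg (hH0 x₂) hs₁nn),
      mul_nonneg (hBpos t).le (mul_nonneg (hH0 x₁) hs₁nn),
      mul_nonneg (hBpos t).le (mul_nonneg (hH0 x₂) hs₂nn)]
  by_cases hL : DifferentiableAt ℝ (fun u => Real.log (Zt u)) t
  · have hGd : DifferentiableAt ℝ (fun u => Real.log (A u + B u)) t := hG.differentiableAt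
    have hderiv : deriv (fun u => Real.log (A u + B u) - Real.log (Zt u) - Real.log 2) t
        = G' - deriv (fun u => Real.log (Zt u)) t := by
      rw [deriv_fun_sub (f := fun u => Real.log (A u + B u) - Real.log (Zt u)) (hGd.sub hL) (differentiableAt_const _), deriv_const, sub_zero,
        deriv_fun_sub hGd hL, hG.deriv]
    have hLanti : Antitone fun u => Real.log (Zt u) := fun u v huv =>
      Real.log_le_log (hZpos v) (hZanti huv)
    have hLnonpos : deriv (fun u => Real.log (Zt u)) t ≤ 0 := by
      have h' : HasDerivAt (fun u => -Real.log (Zt u))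
          (-(deriv (fun u => Real.log (Zt u)) t)) t := hL.hasDerivAt.neg
      have := monotone_hasDerivAt_nonneg' hLanti.neg h'
      linarith
    rw [hderiv]
    linarith
  · have hnd : ¬ DifferentiableAt ℝ
        (fun u => Real.log (A u + B u) - Real.log (Zt u) - Real.log 2) t := by
      intro hdiff
      apply hL
      have heq : (fun u => Real.log (Zt u))
          = fun u => Real.log (A u + B u)
              - (Real.log (A u + B u) - Real.log (Zt u) - Real.log 2) - Real.log 2 := by
        funext u; ring
      rw [heq]
      exact (hG.differentiableAt.sub hdiff).sub (differentiableAt_const _)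
    rw [deriv_zero_of_not_differentiableAt hnd, neg_zero]
    exact mul_nonneg (add_nonneg hs₁nn hs₂nn) (add_nonneg (hH0 x₁) (hH0 x₂))
end
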